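/- Let m, n ≥ 1, let G be the subgroup of bijections of ℤ × {1,...,2n} generated by φ = ρ ∘ τ^m (where ρ(k,i) = (k+i-n, 2n+1-i) and τ(k,i) = (k-1,i)), and let ν = ρ ∘ τ^{1-n}. Then ν ∈ G if and only if (2m-1) divides (2n-1). -/

import Mathlib

/-- with `ρ(k,i) = (k+i-n, 2n+1-i)` and `τ(k,i) = (k-1,i)` acting on
`ℤ × {1,...,2n}`, and `ν = ρ ∘ τ^{1-n}`, one has `ν ∈ ⟨ρ ∘ τ^m⟩` if and only if
`2m-1` divides `2n-1`. -/
theorem stmt_3 (m n : ℕ) (hm : 1 ≤ m) (hn : 1 ≤ n)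
    (ρ τ : Equiv.Perm (ℤ × Set.Icc (1 : ℤ) (2 * (n : ℤ))))
    (hρ : ∀ p, (ρ p).1 = p.1 + (p.2 : ℤ) - (n : ℤ) ∧
      ((ρ p).2 : ℤ) = 2 * (n : ℤ) + 1 - (p.2 : ℤ))
    (hτ : ∀ p, (τ p).1 = p.1 - 1 ∧ ((τ p).2 : ℤ) = (p.2 : ℤ)) :
    ρ * τ ^ ((1 : ℤ) - (n : ℤ)) ∈ Subgroup.zpowers (ρ * τ ^ (m : ℤ)) ↔
      (2 * (m : ℤ) - 1) ∣ (2 * (n : ℤ) - 1) := by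
  have hn' : (1 : ℤ) ≤ (n : ℤ) := by exact_mod_cast hn
  -- facts about τ⁻¹
  have hτinv : ∀ p, (τ⁻¹ p).1 = p.1 + 1 ∧ ((τ⁻¹ p).2 : ℤ) = (p.2 : ℤ) := by
    intro p
    have h := hτ (τ⁻¹ p)
    rw [show τ (τ⁻¹ p) = p from τ.apply_symm_apply p] at h
    exact ⟨by omega, h.2.symm⟩
  -- facts about τ ^ j
  have hτz : ∀ j : ℤ, ∀ p, ((τ ^ j) p).1 = p.1 - j ∧ (((τ ^ j) p).2 : ℤ) = (p.2 : ℤ) := by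
    intro j
    induction j using Int.induction_on with
    | zero => intro p; simp
    | succ k ih =>
        intro p
        have e : (τ ^ ((k : ℤ) + 1)) p = (τ ^ (k : ℤ)) (τ p) := by
          rw [zpow_add_one, Equiv.Perm.mul_apply]
        rw [e]
        have h1 := ih (τ p)
        have h2 := hτ p
        exact ⟨by omega, by omega⟩
    | pred k ih =>
        intro p
        have e : (τ ^ (-(k : ℤ) - 1)) p = (τ ^ (-(k : ℤ))) (τ⁻¹ p) := by
          rw [zpow_sub_one, Equiv.Perm.mul_apply]
        rw [e]
        have h1 := ih (τ⁻¹ p)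
        have h2 := hτinv p
        exact ⟨by omega, by omega⟩
  -- ρ ∘ ρ ∘ τ = 1
  have hρ2 : ρ * ρ * τ = 1 := by
    ext p
    · show ((ρ * ρ * τ) p).1 = p.1
      simp only [Equiv.Perm.mul_apply]
      have h1 := hτ p
      have h2 := hρ (τ p)
      have h3 := hρ (ρ (τ p))
      have h4 : (1 : ℤ) ≤ (p.2 : ℤ) := p.2.2.1
      omega
    · show (((ρ * ρ * τ) p).2 : ℤ) = (p.2 : ℤ)
      simp only [Equiv.Perm.mul_apply]
      have h1 := hτ p
      have h2 := hρ (τ p)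
      have h3 := hρ (ρ (τ p))
      omega
  have hτeq : τ = ρ ^ (-2 : ℤ) := by
    have h1 : τ = (ρ * ρ)⁻¹ := by
      have := congrArg (fun x => (ρ * ρ)⁻¹ * x) hρ2
      simpa [mul_assoc] using this
    rw [h1]; group
  have key : ∀ a : ℤ, ρ * τ ^ a = ρ ^ (1 - 2 * a) := by
    intro a
    rw [hτeq, ← zpow_mul]
    calc ρ * ρ ^ (-2 * a) = ρ ^ (1 : ℤ) * ρ ^ (-2 * a) := by rw [zpow_one]
      _ = ρ ^ (1 + -2 * a) := (zpow_add ρ 1 (-2 * a)).symm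
      _ = ρ ^ (1 - 2 * a) := by ring_nf
  -- ρ has infinite order
  let p0 : ℤ × Set.Icc (1 : ℤ) (2 * (n : ℤ)) := ((0 : ℤ), ⟨1, by constructor <;> omega⟩)
  have hp01 : p0.1 = 0 := rfl
  have hp02 : (p0.2 : ℤ) = 1 := rfl
  have hzero : ∀ a : ℤ, ρ ^ a = 1 → a = 0 := by
    intro a ha
    rcases Int.even_or_odd a with ⟨k, hk⟩ | ⟨k, hk⟩
    · -- a = k + k : ρ^a = τ^(-k)
      have h1 : τ ^ (-k) = ρ ^ a := by
        rw [hτeq, ← zpow_mul, show (-2 : ℤ) * (-k) = a by omega]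
      have h2 := hτz (-k) p0
      rw [h1, ha] at h2
      simp only [Equiv.Perm.one_apply] at h2
      omega
    · -- a = 2k + 1 : ρ^a = ρ * τ^(-k)
      have h1 : ρ * τ ^ (-k) = ρ ^ a := by
        rw [key, show (1 - 2 * (-k) : ℤ) = a by omega]
      have h2 := hτz (-k) p0
      have h3 := hρ ((τ ^ (-k)) p0)
      have h4 : (ρ * τ ^ (-k)) p0 = p0 := by rw [h1, ha]; rfl
      rw [Equiv.Perm.mul_apply] at h4
      rw [h4] at h3
      omega
  have hinj : ∀ a b : ℤ, ρ ^ a = ρ ^ b → a = b := by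
    intro a b hab
    have : ρ ^ (a - b) = 1 := by
      rw [zpow_sub, hab, mul_inv_cancel]
    have := hzero _ this
    omega
  rw [Subgroup.mem_zpowers_iff]
  constructor
  · rintro ⟨t, ht⟩
    rw [key, key, ← zpow_mul] at ht
    have h := hinj _ _ ht
    exact ⟨-t, by linear_combination -h⟩
  · rintro ⟨t, ht⟩
    refine ⟨-t, ?_⟩
    rw [key, key, ← zpow_mul]
    congr 1
    linear_combination -ht
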